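/- Let M = (m_1,...,m_k) be a tuple of positive integers with m_k ≥ 2, and let I = (i_1,...,i_j) be an allowable sub-tuple for M. Then n⁺(M_I) − n⁻(M_I) = δ + Σ_{ℓ=1}^{j} (−1)^{i_ℓ} m_{i_ℓ}, where δ = 0 if k is even and δ = 1 if k is odd. -/
import Mathlib


/-- Continued fraction value of a list of rationals:
`cf [n₁,...,n_k] = 1/(n₁ + 1/(n₂ + ... + 1/n_k))`. -/
def cf : List ℚ → ℚ
  | [] => 0
  | n :: L => 1 / (n + cf L)

/-- The alternating sequence `-2, 2, -2, 2, ..., ±2` of length `n`. -/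
def altSeq (n : ℕ) : List ℤ :=
  (List.range n).map (fun j => (-1 : ℤ) ^ (j + 1) * 2)

/-- The `i`-th entry (1-based) of the tuple `M`. -/
def ent (M : List ℕ) (i : ℕ) : ℕ := M.getD (i - 1) 0

/-- `I` is an allowable sub-tuple for the tuple `M` of positive integers:
a strictly increasing tuple of indices in `{1,...,k}` with consecutive
gaps at least 2, such that for every index `i` with `m_i = 1` at least
one of `i-1, i, i+1` belongs to `I`. -/
def IsAllowable (M : List ℕ) (I : List ℕ) : Prop :=
  I.Chain' (fun a b => a + 2 ≤ b) ∧
  (∀ i ∈ I, 1 ≤ i ∧ i ≤ M.length) ∧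
  (∀ i, 1 ≤ i → i ≤ M.length → ent M i = 1 → (i - 1 ∈ I ∨ i ∈ I ∨ i + 1 ∈ I))

/-- The sign `∏_{i' ∈ I, i' < i} (-1)^(m_{i'})` adjusting the entries coming
from position `i` of `M`. -/
def subSign (M : List ℕ) (I : List ℕ) (i : ℕ) : ℤ :=
  ((I.filter (fun i' => decide (i' < i))).map (fun i' => (-1 : ℤ) ^ ent M i')).prod

/-- Before sign adjustment, the block of entries of `M_I` coming from position `i`
of `M`: either the alternating sequence `-2,2,...,±2` of length `m_i - 1`
(if `i ∈ I`), or the single entry `m_i` increased by 1 for each neighbor of `i`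
lying in `I`. -/
def block (M : List ℕ) (I : List ℕ) (i : ℕ) : List ℤ :=
  if i ∈ I then altSeq (ent M i - 1)
  else [(ent M i : ℤ) + (if i - 1 ∈ I then 1 else 0) + (if i + 1 ∈ I then 1 else 0)]

/-- The continued fraction expansion `M_I` associated to an allowable sub-tuple `I`
of `M`. -/
def MI (M : List ℕ) (I : List ℕ) : List ℤ :=
  ((List.range M.length).map (fun idx =>
    (block M I (idx + 1)).map (fun q => subSign M I (idx + 1) * q))).flatten

/-- `n⁺(N) = #{i : (-1)^(i+1) n_i > 0}` (1-based `i`). -/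
def nplus (N : List ℤ) : ℕ :=
  ((List.range N.length).filter
    (fun idx => decide (0 < (-1 : ℤ) ^ idx * N.getD idx 0))).length

/-- `n⁻(N) = #{i : (-1)^(i+1) n_i < 0}` (1-based `i`). -/
def nminus (N : List ℤ) : ℕ :=
  ((List.range N.length).filter
    (fun idx => decide ((-1 : ℤ) ^ idx * N.getD idx 0 < 0))).length

/-- `Σ_{i ∈ I} (-1)^i m_i`. -/
def sgnSum (M : List ℕ) (I : List ℕ) : ℤ :=
  (I.map (fun i => (-1 : ℤ) ^ i * (ent M i : ℤ))).sum

/-- The dual sub-tuple `(k+1-i_j, ..., k+1-i_1)` of `I = (i_1,...,i_j)`. -/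
def dualSub (k : ℕ) (I : List ℕ) : List ℕ :=
  (I.map (fun i => k + 1 - i)).reverse

/-- `(m_1,...,m_k)` is super-increasing if `m_i > Σ_{j<i} m_j` for all `i`. -/
def SuperInc (M : List ℕ) : Prop :=
  ∀ i, 1 ≤ i → i ≤ M.length → (M.take (i - 1)).sum < ent M i


/-! ### Auxiliary machinery -/

/-- Alternating signed count: `gg [n₁,...] = sign n₁ - sign n₂ + ...` computed as a fold. -/
def gg : List ℤ → ℤ
  | [] => 0
  | a :: L => a.sign - gg L

lemma gg_append (A B : List ℤ) : gg (A ++ B) = gg A + (-1) ^ A.length * gg B := by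
  induction A with
  | nil => simp [gg]
  | cons a A ih => simp [gg, ih, pow_succ]; ring

lemma gg_map_mul (c : ℤ) (B : List ℤ) : gg (B.map (fun q => c * q)) = c.sign * gg B := by
  induction B with
  | nil => simp [gg]
  | cons b B ih => simp [gg, ih, Int.sign_mul]; ring

lemma altSeq_succ (n : ℕ) : altSeq (n + 1) = -2 :: (altSeq n).map (fun q => -q) := by
  unfold altSeq
  rw [List.range_succ_eq_map, List.map_cons, List.map_map, List.map_map]
  refine congrArg₂ _ (by norm_num) ?_
  refine List.map_congr_left fun j hj => ?_
  simp [Function.comp, pow_succ]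

lemma gg_altSeq (n : ℕ) : gg (altSeq n) = -(n : ℤ) := by
  induction n with
  | zero => simp [altSeq, gg]
  | succ n ih =>
    rw [altSeq_succ]
    have : (altSeq n).map (fun q => -q) = (altSeq n).map (fun q => (-1) * q) := by
      refine List.map_congr_left fun q _ => by ring
    simp [gg, this, gg_map_mul, ih]
    rw [show Int.sign 2 = 1 from rfl]
    ring

lemma length_altSeq (n : ℕ) : (altSeq n).length = n := by simp [altSeq]

lemma prod_map_pow (f : ℕ → ℕ) (L : List ℕ) :
    (L.map (fun a => (-1 : ℤ) ^ f a)).prod = (-1) ^ ((L.map f).sum) := by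
  induction L with
  | nil => simp
  | cons a L ih => simp [ih, pow_add]

lemma sign_neg_one_pow (k : ℕ) : ((-1 : ℤ) ^ k).sign = (-1) ^ k := by
  rcases Nat.even_or_odd k with h | h
  · rw [h.neg_one_pow]; rfl
  · rw [h.neg_one_pow]; rfl

lemma npow_parity (a b : ℕ) (h : a % 2 = b % 2) : (-1 : ℤ) ^ a = (-1) ^ b := by
  rcases Nat.even_or_odd a with ha | ha
  · have hb : Even b := by rw [Nat.even_iff] at *; omega
    rw [ha.neg_one_pow, hb.neg_one_pow]
  · have hb : Odd b := by rw [Nat.odd_iff] at *; omega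
    rw [ha.neg_one_pow, hb.neg_one_pow]

lemma filter_le_of_notMem (I : List ℕ) (n : ℕ) (h : n + 1 ∉ I) :
    I.filter (fun i => decide (i ≤ n + 1)) = I.filter (fun i => decide (i ≤ n)) := by
  refine List.filter_congr fun i hi => ?_
  have : i ≠ n + 1 := by rintro rfl; exact h hi
  simp only [decide_eq_decide]; omega

lemma sum_filter_succ {α : Type*} [AddCommMonoid α] (f : ℕ → α) (I : List ℕ) (hnd : I.Nodup)
    (n : ℕ) (h : n + 1 ∈ I) :
    ((I.filter (fun i => decide (i ≤ n + 1))).map f).sum =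
      ((I.filter (fun i => decide (i ≤ n))).map f).sum + f (n + 1) := by
  induction I with
  | nil => cases h
  | cons a I ih =>
    rcases List.nodup_cons.mp hnd with ⟨ha, hnd'⟩
    by_cases hae : a = n + 1
    · subst hae
      rw [List.filter_cons, List.filter_cons, filter_le_of_notMem I n ha]
      simp [Nat.lt_irrefl]
      exact add_comm _ _
    · have hmem : n + 1 ∈ I := by
        rcases List.mem_cons.mp h with h' | h'
        · exact absurd h'.symm hae
        · exact h'
      by_cases hle : a ≤ n
      · have ht1 : decide (a ≤ n + 1) = true := by simp only [decide_eq_true_eq]; omega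
        have ht2 : decide (a ≤ n) = true := by simp only [decide_eq_true_eq]; omega
        rw [List.filter_cons, List.filter_cons, ht1, ht2]
        simp only [if_true, List.map_cons, List.sum_cons]
        rw [ih hnd' hmem, add_assoc]
      · have ht1 : decide (a ≤ n + 1) = false := by simp only [decide_eq_false_iff_not]; omega
        have ht2 : decide (a ≤ n) = false := by simp only [decide_eq_false_iff_not]; omega
        rw [List.filter_cons, List.filter_cons, ht1, ht2]
        simp only [Bool.false_eq_true, if_false]
        exact ih hnd' hmem

lemma ent_pos (M : List ℕ) (hpos : ∀ m ∈ M, 0 < m) (i : ℕ) (h1 : 1 ≤ i) (h2 : i ≤ M.length) :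
    0 < ent M i := by
  have hlt : i - 1 < M.length := by omega
  unfold ent
  rw [List.getD_eq_getElem M 0 hlt]
  exact hpos _ (List.getElem_mem hlt)

/-- The prefix of `MI` coming from the first `n` positions. -/
def MIpart (M : List ℕ) (I : List ℕ) (n : ℕ) : List ℤ :=
  ((List.range n).map (fun idx =>
    (block M I (idx + 1)).map (fun q => subSign M I (idx + 1) * q))).flatten

lemma subSign_eq (M I : List ℕ) (n : ℕ) :
    subSign M I (n + 1) = (-1) ^ (((I.filter (fun i => decide (i ≤ n))).map (ent M)).sum) := by
  unfold subSign
  rw [show I.filter (fun i' => decide (i' < n + 1)) = I.filter (fun i => decide (i ≤ n)) from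
    List.filter_congr fun i _ => by simp only [decide_eq_decide]; omega]
  exact prod_map_pow (ent M) _

lemma MIpart_succ (M I : List ℕ) (n : ℕ) :
    MIpart M I (n + 1) = MIpart M I n ++
      (block M I (n + 1)).map (fun q => subSign M I (n + 1) * q) := by
  unfold MIpart
  rw [List.range_succ]
  simp

lemma main_induction (M I : List ℕ) (hpos : ∀ m ∈ M, 0 < m) (hnd : I.Nodup)
    (hub : ∀ i ∈ I, 1 ≤ i ∧ i ≤ M.length) :
    ∀ n, n ≤ M.length →
      ((-1 : ℤ) ^ (MIpart M I n).length =
        (-1) ^ (n + ((I.filter (fun i => decide (i ≤ n))).map (ent M)).sum)) ∧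
      gg (MIpart M I n) = (if n % 2 = 0 then (0 : ℤ) else 1) +
        ((I.filter (fun i => decide (i ≤ n))).map (fun i => (-1 : ℤ) ^ i * (ent M i : ℤ))).sum := by
  intro n
  induction n with
  | zero =>
    intro _
    have hf : I.filter (fun i => decide (i ≤ 0)) = [] := by
      refine List.filter_eq_nil_iff.mpr fun a ha => ?_
      have := (hub a ha).1; simp; omega
    rw [hf]
    simp [MIpart, gg]
  | succ n ih =>
    intro hn1
    have hn : n ≤ M.length := by omega
    obtain ⟨H1, H2⟩ := ih hn
    have hm : 0 < ent M (n + 1) := ent_pos M hpos (n + 1) (by omega) hn1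
    set E : ℕ := ((I.filter (fun i => decide (i ≤ n))).map (ent M)).sum with hE
    have hsub : subSign M I (n + 1) = (-1) ^ E := subSign_eq M I n
    have hcoef : (-1 : ℤ) ^ (MIpart M I n).length * ((-1 : ℤ) ^ E) = (-1) ^ n := by
      rw [H1, pow_add, mul_assoc, ← pow_add]
      have : Even (E + E) := ⟨E, rfl⟩
      rw [this.neg_one_pow, mul_one]
    rw [MIpart_succ]
    constructor
    · rw [List.length_append, pow_add, List.length_map]
      by_cases hmem : n + 1 ∈ I
      · have hlen : (block M I (n + 1)).length = ent M (n + 1) - 1 := by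
          simp [block, hmem, length_altSeq]
        have hE1 : ((I.filter (fun i => decide (i ≤ n + 1))).map (ent M)).sum
            = E + ent M (n + 1) := sum_filter_succ (ent M) I hnd n hmem
        rw [hlen, H1, ← pow_add, hE1]
        apply npow_parity
        omega
      · have hlen : (block M I (n + 1)).length = 1 := by
          simp [block, hmem]
        have hE1 : I.filter (fun i => decide (i ≤ n + 1)) = I.filter (fun i => decide (i ≤ n)) :=
          filter_le_of_notMem I n hmem
        rw [hlen, H1, ← pow_add, hE1]
        apply npow_parity
        omega
    · rw [gg_append, H2, gg_map_mul, hsub, sign_neg_one_pow, ← mul_assoc, hcoef]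
      by_cases hmem : n + 1 ∈ I
      · have hblock : gg (block M I (n + 1)) = 1 - (ent M (n + 1) : ℤ) := by
          simp only [block, hmem, if_true, gg_altSeq]
          have : ((ent M (n + 1) - 1 : ℕ) : ℤ) = (ent M (n + 1) : ℤ) - 1 := by
            push_cast [hm]; ring
          rw [this]; ring
        have hS : ((I.filter (fun i => decide (i ≤ n + 1))).map
              (fun i => (-1 : ℤ) ^ i * (ent M i : ℤ))).sum
            = ((I.filter (fun i => decide (i ≤ n))).map
              (fun i => (-1 : ℤ) ^ i * (ent M i : ℤ))).sum
              + (-1 : ℤ) ^ (n + 1) * (ent M (n + 1) : ℤ) :=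
          sum_filter_succ _ I hnd n hmem
        rw [hblock, hS]
        rcases Nat.even_or_odd n with hpar | hpar
        · have h0 : n % 2 = 0 := Nat.even_iff.mp hpar
          have h1 : (n + 1) % 2 = 1 := by omega
          rw [hpar.neg_one_pow]
          simp only [h0, h1, if_true]
          norm_num
          rw [pow_succ, hpar.neg_one_pow]
          ring
        · have h0 : n % 2 = 1 := Nat.odd_iff.mp hpar
          have h1 : (n + 1) % 2 = 0 := by omega
          rw [hpar.neg_one_pow]
          simp only [h0, h1]
          norm_num
          rw [pow_succ, hpar.neg_one_pow]
          ring
      · have hblock : gg (block M I (n + 1)) = 1 := by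
          simp only [block, hmem, if_false, gg]
          have hx : (0 : ℤ) < (ent M (n + 1) : ℤ) + (if n + 1 - 1 ∈ I then 1 else 0)
              + (if n + 1 + 1 ∈ I then 1 else 0) := by
            have : (1 : ℤ) ≤ (ent M (n + 1) : ℤ) := by exact_mod_cast hm
            split_ifs <;> linarith
          rw [Int.sign_eq_one_iff_pos.mpr hx]
          ring
        have hS : I.filter (fun i => decide (i ≤ n + 1)) = I.filter (fun i => decide (i ≤ n)) :=
          filter_le_of_notMem I n hmem
        rw [hblock, hS]
        rcases Nat.even_or_odd n with hpar | hpar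
        · have h0 : n % 2 = 0 := Nat.even_iff.mp hpar
          have h1 : (n + 1) % 2 = 1 := by omega
          rw [hpar.neg_one_pow]
          simp only [h0, h1]
          norm_num
          ring
        · have h0 : n % 2 = 1 := Nat.odd_iff.mp hpar
          have h1 : (n + 1) % 2 = 0 := by omega
          rw [hpar.neg_one_pow]
          simp only [h0, h1]
          norm_num

lemma nplus_cons (a : ℤ) (L : List ℤ) :
    nplus (a :: L) = (if 0 < a then 1 else 0) + nminus L := by
  unfold nplus nminus
  rw [List.length_cons, List.range_succ_eq_map, List.filter_cons]
  have hpred : (fun idx => decide (0 < (-1 : ℤ) ^ idx * (a :: L).getD idx 0)) ∘ Nat.succ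
      = fun idx => decide ((-1 : ℤ) ^ idx * L.getD idx 0 < 0) := by
    funext j
    simp only [Function.comp, List.getD_cons_succ, decide_eq_decide, pow_succ]
    constructor <;> intro h <;> nlinarith [h]
  rw [List.filter_map, hpred]
  simp only [pow_zero, one_mul, List.getD_cons_zero, List.length_map]
  split_ifs <;> simp_all <;> omega

lemma nminus_cons (a : ℤ) (L : List ℤ) :
    nminus (a :: L) = (if a < 0 then 1 else 0) + nplus L := by
  unfold nplus nminus
  rw [List.length_cons, List.range_succ_eq_map, List.filter_cons]
  have hpred : (fun idx => decide ((-1 : ℤ) ^ idx * (a :: L).getD idx 0 < 0)) ∘ Nat.succ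
      = fun idx => decide (0 < (-1 : ℤ) ^ idx * L.getD idx 0) := by
    funext j
    simp only [Function.comp, List.getD_cons_succ, decide_eq_decide, pow_succ]
    constructor <;> intro h <;> nlinarith [h]
  rw [List.filter_map, hpred]
  simp only [pow_zero, one_mul, List.getD_cons_zero, List.length_map]
  split_ifs <;> simp_all <;> omega

lemma nplus_sub_nminus_eq_gg (N : List ℤ) : (nplus N : ℤ) - nminus N = gg N := by
  induction N with
  | nil => simp [nplus, nminus, gg]
  | cons a L ih =>
    rw [nplus_cons, nminus_cons]
    simp only [gg]
    rcases lt_trichotomy a 0 with h | h | h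
    · rw [if_neg (by omega), if_pos h, Int.sign_eq_neg_one_iff_neg.mpr h]
      push_cast
      linarith
    · subst h
      norm_num
      linarith
    · rw [if_pos h, if_neg (by omega), Int.sign_eq_one_iff_pos.mpr h]
      push_cast
      linarith

/-- Theorem 4.1 of the paper: for an allowable sub-tuple `I` of `M`,
`n⁺(M_I) - n⁻(M_I) = δ + Σ_{ℓ} (-1)^(i_ℓ) m_(i_ℓ)`, where `δ = 0` if `k`
is even and `δ = 1` if `k` is odd. -/
theorem nplus_sub_nminus_MI (M : List ℕ) (hpos : ∀ m ∈ M, 0 < m)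
    (hlast : 2 ≤ M.getLastD 0) (I : List ℕ) (hI : IsAllowable M I) :
    (nplus (MI M I) : ℤ) - (nminus (MI M I) : ℤ) =
      (if M.length % 2 = 0 then 0 else 1) + sgnSum M I := by
  have hnd : I.Nodup := by
    haveI : IsTrans ℕ (fun a b => a + 2 ≤ b) := ⟨fun a b c h1 h2 => by omega⟩
    have hp := (List.isChain_iff_pairwise.mp hI.1)
    exact hp.imp (fun {a b} h => by omega)
  have hub := hI.2.1
  obtain ⟨H1, H2⟩ := main_induction M I hpos hnd hub M.length le_rfl
  have hMI : MI M I = MIpart M I M.length := rfl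
  have hfilt : I.filter (fun i => decide (i ≤ M.length)) = I :=
    List.filter_eq_self.mpr fun a ha => by simp [(hub a ha).2]
  rw [nplus_sub_nminus_eq_gg, hMI, H2, hfilt]
  rfl
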